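/- arXiv:2506.03974 — 3 statements merged into one kernel-verified Lean document; each statement's English description precedes it below -/
import Mathlib

section
/- The convex conjugate of g equals the positive part of the shifted conjugate of h: for all v ∈ ℝ, g*(v) = max(h*(v) − λ, 0). -/
noncomputable section

open Set
open scoped Classical

/-- Convex (Fenchel) conjugate of an extended-real-valued function on `ℝ`. -/
def conj (f : ℝ → EReal) (v : ℝ) : EReal := ⨆ x : ℝ, ((v * x : ℝ) : EReal) - f x

/-- Convex subdifferential of an extended-real-valued function on `ℝ`. -/
def subdiff (f : ℝ → EReal) (x : ℝ) : Set ℝ :=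
  {d : ℝ | ∀ y : ℝ, f x + ((d * (y - x) : ℝ) : EReal) ≤ f y}

/-- Convexity of an extended-real-valued function on `ℝ`. -/
def EConvexOn (f : ℝ → EReal) : Prop :=
  ∀ x y a b : ℝ, 0 ≤ a → 0 ≤ b → a + b = 1 →
    f (a * x + b * y) ≤ (a : EReal) * f x + (b : EReal) * f y

/-- The ℓ₀-penalized regularizer `g(x) = λ‖x‖₀ + h(x)`. -/
def gfun (lam : ℝ) (h : ℝ → EReal) (x : ℝ) : EReal :=
  (if x = 0 then (0 : EReal) else (lam : EReal)) + h x

/-- The parameter `τ = sup {v ≥ 0 : h*(v) ≤ λ}` (as a real number). -/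
def tau (lam : ℝ) (h : ℝ → EReal) : ℝ :=
  sSup {v : ℝ | 0 ≤ v ∧ conj h v ≤ (lam : EReal)}

/-- The parameter `μ = sup {x ≥ 0 : x ∈ ∂h*(τ)}` if `∂h*(τ) ≠ ∅`, else `+∞`. -/
def mu (lam : ℝ) (h : ℝ → EReal) : EReal :=
  if (subdiff (conj h) (tau lam h)).Nonempty then
    sSup ((fun x : ℝ => (x : EReal)) '' {x : ℝ | 0 ≤ x ∧ x ∈ subdiff (conj h) (tau lam h)})
  else ⊤

/-- The parameter `β = sup {v ≥ 0 : v ∈ dom h*}`. -/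
def beta (h : ℝ → EReal) : EReal :=
  sSup ((fun v : ℝ => (v : EReal)) '' {v : ℝ | 0 ≤ v ∧ conj h v ≠ ⊤})

/-- The parameter `κ = sup {v ≥ 0 : v ∈ ∂h(μ)}` if `μ < +∞`, else `+∞`. -/
def kappa (lam : ℝ) (h : ℝ → EReal) : EReal :=
  if mu lam h ≠ ⊤ then
    sSup ((fun v : ℝ => (v : EReal)) '' {v : ℝ | 0 ≤ v ∧ v ∈ subdiff h (mu lam h).toReal})
  else ⊤

/-- The set of minimizers of `u ↦ ½(u − v)² + γ·ω(u)`, i.e. `prox_{γω}(v)`. -/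
def proxSet (γ : ℝ) (ω : ℝ → EReal) (v : ℝ) : Set ℝ :=
  {u : ℝ | ∀ w : ℝ,
    ((2⁻¹ * (u - v) ^ 2 : ℝ) : EReal) + (γ : EReal) * ω u ≤
      ((2⁻¹ * (w - v) ^ 2 : ℝ) : EReal) + (γ : EReal) * ω w}

theorem conj_gfun_eq_posPart (lam : ℝ) (h : ℝ → EReal) (hlam : 0 < lam)
    (h0 : h 0 = 0) (hge : ∀ x : ℝ, 0 ≤ h x)
    (hlsc : LowerSemicontinuous h) (hconv : EConvexOn h)
    (hdom : ∃ x : ℝ, 0 < x ∧ h x ≠ ⊤) :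
    ∀ v : ℝ, conj (gfun lam h) v = max (conj h v - (lam : EReal)) 0 := by
  intro v
  have hA0 : (0 : EReal) ≤ conj h v := by
    have := le_iSup (fun x : ℝ => ((v * x : ℝ) : EReal) - h x) 0
    simpa [h0, conj] using this
  have key : ∀ x : ℝ, x ≠ 0 →
      ((v * x : ℝ) : EReal) - gfun lam h x = (((v * x : ℝ) : EReal) - h x) - (lam : EReal) := by
    intro x hx
    have hb : h x ≠ ⊥ := fun hb => by simpa [hb] using hge x
    unfold gfun
    rw [if_neg hx]
    generalize h x = b at hb
    induction b with
    | bot => exact absurd rfl hb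
    | coe r => norm_cast; ring
    | top => rw [EReal.coe_add_top, EReal.sub_top, EReal.bot_sub]
  apply le_antisymm
  · apply iSup_le
    intro x
    by_cases hx : x = 0
    · subst hx
      simp only [gfun, if_pos rfl, h0, add_zero]
      simpa using le_max_right (conj h v - (lam : EReal)) 0
    · rw [key x hx]
      refine le_trans ?_ (le_max_left _ _)
      exact EReal.sub_le_sub (le_iSup (fun x : ℝ => ((v * x : ℝ) : EReal) - h x) x) le_rfl
  · rw [max_le_iff]
    constructor
    · rw [EReal.sub_le_iff_le_add (.inl (by exact EReal.coe_ne_bot lam))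
        (.inl (by exact EReal.coe_ne_top lam))]
      apply iSup_le
      intro x
      by_cases hx : x = 0
      · subst hx
        rw [h0]
        calc ((v * 0 : ℝ) : EReal) - 0 = 0 := by norm_num
        _ ≤ conj (gfun lam h) v + (lam : EReal) := by
            refine add_nonneg ?_ (by exact_mod_cast hlam.le)
            have := le_iSup (fun x : ℝ => ((v * x : ℝ) : EReal) - gfun lam h x) 0
            simpa [gfun, h0, conj] using this
      · have h1 : ((v * x : ℝ) : EReal) - gfun lam h x ≤ conj (gfun lam h) v :=
          le_iSup (fun x : ℝ => ((v * x : ℝ) : EReal) - gfun lam h x) x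
        have h2 : ((v * x : ℝ) : EReal) - h x ≤
            (((v * x : ℝ) : EReal) - gfun lam h x) + (lam : EReal) := by
          rw [key x hx, EReal.sub_add_cancel]
        exact h2.trans (add_le_add_left h1 _)
    · have := le_iSup (fun x : ℝ => ((v * x : ℝ) : EReal) - gfun lam h x) 0
      simpa [gfun, h0, conj] using this
end
end

section
/- Under the blanket assumptions and evenness of h, g*(v) = 0 if and only if |v| ≤ τ, where τ = sup{v ≥ 0 : h*(v) ≤ λ}. -/
noncomputable section

open Set
open scoped Classical

section Aux

variable {lam v : ℝ} {h : ℝ → EReal}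

/-- Reformulate `(c : EReal) - a ≤ d` when `0 ≤ a`. -/
lemma coe_sub_le_coe_iff {c d : ℝ} {a : EReal} (ha : 0 ≤ a) :
    (c : EReal) - a ≤ (d : EReal) ↔ (c : EReal) ≤ (d : EReal) + a := by
  refine EReal.sub_le_iff_le_add ?_ ?_
  · exact Or.inl (fun hb => by simp [hb] at ha)
  · exact Or.inr (EReal.coe_ne_bot d)

lemma conj_h_le_iff (hlam : 0 < lam) (h0 : h 0 = 0) (hge : ∀ x : ℝ, 0 ≤ h x) :
    conj h v ≤ (lam : EReal) ↔ ∀ x : ℝ, ((v * x : ℝ) : EReal) ≤ (lam : EReal) + h x := by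
  unfold conj
  rw [iSup_le_iff]
  exact forall_congr' fun x => coe_sub_le_coe_iff (hge x)

lemma gfun_zero (h0 : h 0 = 0) : gfun lam h 0 = 0 := by
  simp [gfun, h0]

lemma conj_gfun_nonneg (h0 : h 0 = 0) : 0 ≤ conj (gfun lam h) v := by
  have := le_iSup (fun x : ℝ => ((v * x : ℝ) : EReal) - gfun lam h x) 0
  simpa [conj, gfun_zero h0] using this

lemma gfun_nonneg (hlam : 0 < lam) (h0 : h 0 = 0) (hge : ∀ x : ℝ, 0 ≤ h x) (x : ℝ) :
    0 ≤ gfun lam h x := by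
  unfold gfun
  refine add_nonneg ?_ (hge x)
  split <;> simp [le_of_lt hlam, EReal.coe_nonneg]

lemma conj_gfun_le_iff (hlam : 0 < lam) (h0 : h 0 = 0) (hge : ∀ x : ℝ, 0 ≤ h x) :
    conj (gfun lam h) v ≤ 0 ↔
      ∀ x : ℝ, x ≠ 0 → ((v * x : ℝ) : EReal) ≤ (lam : EReal) + h x := by
  unfold conj
  rw [iSup_le_iff]
  constructor
  · intro H x hx
    have := H x
    rw [show (0 : EReal) = ((0:ℝ) : EReal) by simp] at this
    rw [coe_sub_le_coe_iff (gfun_nonneg hlam h0 hge x)] at this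
    have hg : gfun lam h x = (lam : EReal) + h x := by simp [gfun, hx]
    rw [hg] at this
    simpa using this
  · intro H x
    by_cases hx : x = 0
    · subst hx; simp [gfun_zero h0]
    · have hg : gfun lam h x = (lam : EReal) + h x := by simp [gfun, hx]
      rw [hg, show (0 : EReal) = ((0:ℝ) : EReal) by simp,
        coe_sub_le_coe_iff (by exact add_nonneg (by exact_mod_cast le_of_lt hlam) (hge x))]
      simpa using H x hx

lemma conj_gfun_eq_zero_iff_conj_h (hlam : 0 < lam) (h0 : h 0 = 0)
    (hge : ∀ x : ℝ, 0 ≤ h x) :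
    conj (gfun lam h) v = 0 ↔ conj h v ≤ (lam : EReal) := by
  rw [conj_h_le_iff hlam h0 hge]
  constructor
  · intro H x
    have hle : conj (gfun lam h) v ≤ 0 := le_of_eq H
    rw [conj_gfun_le_iff hlam h0 hge] at hle
    by_cases hx : x = 0
    · subst hx
      simp only [mul_zero, h0, add_zero]
      exact_mod_cast le_of_lt hlam
    · exact hle x hx
  · intro H
    refine le_antisymm ?_ (conj_gfun_nonneg h0)
    rw [conj_gfun_le_iff hlam h0 hge]
    exact fun x _ => H x

lemma conj_even (heven : ∀ x : ℝ, h (-x) = h x) (v : ℝ) :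
    conj h (-v) = conj h v := by
  unfold conj
  refine le_antisymm (iSup_le fun x => ?_) (iSup_le fun x => ?_)
  · have := le_iSup (fun x : ℝ => ((v * x : ℝ) : EReal) - h x) (-x)
    simpa [heven, mul_comm, neg_mul, mul_neg] using this
  · have := le_iSup (fun x : ℝ => (((-v) * x : ℝ) : EReal) - h x) (-x)
    simpa [heven, mul_comm, neg_mul, mul_neg] using this

end Aux


theorem conj_gfun_eq_zero_iff (lam : ℝ) (h : ℝ → EReal) (hlam : 0 < lam)
    (h0 : h 0 = 0) (hge : ∀ x : ℝ, 0 ≤ h x)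
    (hlsc : LowerSemicontinuous h) (hconv : EConvexOn h)
    (hdom : ∃ x : ℝ, 0 < x ∧ h x ≠ ⊤) (heven : ∀ x : ℝ, h (-x) = h x) :
    ∀ v : ℝ, conj (gfun lam h) v = 0 ↔ |v| ≤ tau lam h := by
  intro v
  rw [conj_gfun_eq_zero_iff_conj_h hlam h0 hge]
  set S : Set ℝ := {v : ℝ | 0 ≤ v ∧ conj h v ≤ (lam : EReal)} with hS
  have habs : ∀ w : ℝ, conj h |w| = conj h w := by
    intro w
    rcases abs_choice w with hw | hw
    · rw [hw]
    · rw [hw, conj_even heven]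
  have hS0 : (0:ℝ) ∈ S := by
    refine ⟨le_refl _, ?_⟩
    rw [conj_h_le_iff hlam h0 hge]
    intro x
    simp only [zero_mul, EReal.coe_zero]
    exact add_nonneg (by exact_mod_cast le_of_lt hlam) (hge x)
  obtain ⟨x0, hx0, hx0top⟩ := hdom
  have hx0bot : h x0 ≠ ⊥ := fun hb => by simpa [hb] using hge x0
  set r := (h x0).toReal with hr
  have hhx0 : h x0 = (r : EReal) := (EReal.coe_toReal hx0top hx0bot).symm
  have hmemle : ∀ u ∈ S, u ≤ (lam + r) / x0 := by
    intro u hu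
    have := (conj_h_le_iff hlam h0 hge).1 hu.2 x0
    rw [hhx0, ← EReal.coe_add, EReal.coe_le_coe_iff] at this
    exact (le_div_iff₀ hx0).2 this
  have hbdd : BddAbove S := ⟨(lam + r) / x0, fun u hu => hmemle u hu⟩
  have htau : tau lam h = sSup S := rfl
  constructor
  · intro H
    have hmem : |v| ∈ S := ⟨abs_nonneg v, by rw [habs]; exact H⟩
    rw [htau]
    exact le_csSup hbdd hmem
  · intro H
    rw [← habs v]
    have hv0 : 0 ≤ |v| := abs_nonneg v
    rw [conj_h_le_iff hlam h0 hge]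
    intro x
    rcases le_or_gt x 0 with hx | hx
    · have h1 : ((|v| * x : ℝ) : EReal) ≤ 0 := by
        exact_mod_cast mul_nonpos_of_nonneg_of_nonpos hv0 hx
      exact h1.trans (add_nonneg (by exact_mod_cast le_of_lt hlam) (hge x))
    · by_cases hxt : h x = ⊤
      · rw [hxt, EReal.add_top_of_ne_bot (EReal.coe_ne_bot lam)]; exact le_top
      · have hxb : h x ≠ ⊥ := fun hb => by simpa [hb] using hge x
        have hhx : h x = ((h x).toReal : EReal) := (EReal.coe_toReal hxt hxb).symm
        have hub : ∀ u ∈ S, u ≤ (lam + (h x).toReal) / x := by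
          intro u hu
          have := (conj_h_le_iff hlam h0 hge).1 hu.2 x
          rw [hhx, ← EReal.coe_add, EReal.coe_le_coe_iff] at this
          exact (le_div_iff₀ hx).2 this
        have htle : tau lam h ≤ (lam + (h x).toReal) / x := by
          rw [htau]; exact csSup_le ⟨0, hS0⟩ hub
        have hvle : |v| * x ≤ lam + (h x).toReal := (le_div_iff₀ hx).1 (H.trans htle)
        rw [hhx, ← EReal.coe_add]
        exact_mod_cast hvle
end
end

section
/- If μ < +∞, then h(μ) = τμ − λ, where τ = sup{v ≥ 0 : h*(v) ≤ λ} and μ = sup{x ≥ 0 : x ∈ ∂h*(τ)}. -/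
noncomputable section

open Set
open scoped Classical

/-! ### auxiliary lemmas -/


lemma aux_mul_le (a : EReal) (ha : 0 ≤ a) (c : ℝ) (hc : 0 ≤ c) (hc1 : c ≤ 1) : (c:EReal) * a ≤ a := by
  induction a using EReal.rec with
  | bot => simp at ha
  | coe r => norm_cast; nlinarith [EReal.coe_nonneg.mp ha]
  | top =>
    rcases eq_or_lt_of_le hc with rfl|hc
    · simp
    · rw [EReal.mul_top_of_pos (by exact_mod_cast hc)]

variable {h : ℝ → EReal} {lam : ℝ}

lemma FY (v x : ℝ) : ((v * x : ℝ) : EReal) - h x ≤ conj h v :=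
  le_iSup (fun x => ((v * x : ℝ) : EReal) - h x) x

lemma conj_nonneg (h0 : h 0 = 0) (v : ℝ) : 0 ≤ conj h v := by
  have := FY (h := h) v 0
  simpa [h0] using this

lemma h_ne_bot (hge : ∀ x, 0 ≤ h x) (x : ℝ) : h x ≠ ⊥ := fun e => by simpa [e] using hge x

lemma conj_zero (h0 : h 0 = 0) (hge : ∀ x, 0 ≤ h x) : conj h 0 = 0 := by
  refine le_antisymm (iSup_le fun x => ?_) (conj_nonneg h0 0)
  simp only [zero_mul, EReal.coe_zero, zero_sub]
  exact EReal.neg_le.mpr (by simpa using hge x)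

lemma h_mono (h0 : h 0 = 0) (hge : ∀ x, 0 ≤ h x) (hconv : EConvexOn h)
    {x y : ℝ} (hx : 0 ≤ x) (hxy : x ≤ y) : h x ≤ h y := by
  rcases eq_or_lt_of_le hxy with rfl|hlt
  · exact le_rfl
  have hy : 0 < y := lt_of_le_of_lt hx hlt
  have key := hconv y 0 (x/y) (1 - x/y) (by positivity)
    (by rw [sub_nonneg]; exact div_le_one_of_le₀ hxy hy.le) (by ring)
  have e1 : x/y * y + (1 - x/y) * 0 = x := by field_simp; ring
  rw [e1, h0, mul_zero, add_zero] at key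
  exact key.trans (aux_mul_le _ (hge y) _ (by positivity) (div_le_one_of_le₀ hxy hy.le))

lemma toReal_nn (hge : ∀ x, 0 ≤ h x) {x : ℝ} (hx : h x ≠ ⊤) : 0 ≤ (h x).toReal := by
  simpa using EReal.toReal_le_toReal (hge x) (by simp) hx

lemma FY_real (hge : ∀ x, 0 ≤ h x) {v x c : ℝ} (hx : h x ≠ ⊤) (hc : conj h v ≤ (c : EReal)) :
    v * x - (h x).toReal ≤ c := by
  have hfy := (FY (h := h) v x).trans hc
  rw [← EReal.coe_toReal hx (h_ne_bot hge x), ← EReal.coe_sub] at hfy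
  exact_mod_cast hfy

lemma T_zero_mem (hlam : 0 < lam) (h0 : h 0 = 0) (hge : ∀ x, 0 ≤ h x) :
    (0:ℝ) ∈ {v : ℝ | 0 ≤ v ∧ conj h v ≤ (lam : EReal)} :=
  ⟨le_rfl, by rw [conj_zero h0 hge]; exact_mod_cast hlam.le⟩

lemma T_bdd (hge : ∀ x, 0 ≤ h x) (hdom : ∃ x : ℝ, 0 < x ∧ h x ≠ ⊤) :
    BddAbove {v : ℝ | 0 ≤ v ∧ conj h v ≤ (lam : EReal)} := by
  obtain ⟨x0, hx0, hx0t⟩ := hdom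
  refine ⟨(lam + (h x0).toReal)/x0, fun v hv => ?_⟩
  have := FY_real hge hx0t hv.2
  rw [le_div_iff₀ hx0]
  linarith

lemma tau_nonneg (hlam : 0 < lam) (h0 : h 0 = 0) (hge : ∀ x, 0 ≤ h x)
    (hdom : ∃ x : ℝ, 0 < x ∧ h x ≠ ⊤) : 0 ≤ tau lam h :=
  le_csSup (T_bdd hge hdom) (T_zero_mem hlam h0 hge)

lemma conj_tau_le (hlam : 0 < lam) (h0 : h 0 = 0) (hge : ∀ x, 0 ≤ h x)
    (hdom : ∃ x : ℝ, 0 < x ∧ h x ≠ ⊤) : conj h (tau lam h) ≤ (lam : EReal) := by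
  apply iSup_le
  intro x
  by_cases hx : h x = ⊤
  · simp [hx]
  have hxb := h_ne_bot hge x
  rw [← EReal.coe_toReal hx hxb, ← EReal.coe_sub, EReal.coe_le_coe_iff]
  have hH : 0 ≤ (h x).toReal := toReal_nn hge hx
  rcases le_or_gt x 0 with hx0 | hx0
  · have : tau lam h * x ≤ 0 :=
      mul_nonpos_iff.mpr (Or.inl ⟨tau_nonneg hlam h0 hge hdom, hx0⟩)
    linarith
  · have hub : tau lam h ≤ (lam + (h x).toReal)/x := by
      apply csSup_le ⟨0, T_zero_mem hlam h0 hge⟩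
      intro v hv
      have := FY_real hge hx hv.2
      rw [le_div_iff₀ hx0]
      linarith
    have := (mul_le_mul_iff_of_pos_right hx0).mpr hub
    rw [div_mul_cancel₀ _ hx0.ne'] at this
    linarith

lemma conj_convex (hge : ∀ x, 0 ≤ h x) : EConvexOn (conj h) := by
  intro v1 v2 a b ha hb hab
  apply iSup_le
  intro x
  by_cases hx : h x = ⊤
  · rw [hx]
    simp
  have hxb := h_ne_bot hge x
  have hb1 : b = 1 - a := by linarith
  rw [← EReal.coe_toReal hx hxb, ← EReal.coe_sub]
  have key : ((a*v1 + b*v2) * x - (h x).toReal : ℝ)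
      = a * (v1*x - (h x).toReal) + b * (v2*x - (h x).toReal) := by
    rw [hb1]; ring
  rw [key, EReal.coe_add, EReal.coe_mul, EReal.coe_mul]
  refine add_le_add ?_ ?_
  · refine mul_le_mul_of_nonneg_left ?_ (by exact_mod_cast ha)
    rw [EReal.coe_sub, EReal.coe_toReal hx hxb]
    exact FY v1 x
  · refine mul_le_mul_of_nonneg_left ?_ (by exact_mod_cast hb)
    rw [EReal.coe_sub, EReal.coe_toReal hx hxb]
    exact FY v2 x

lemma conj_ne_bot (h0 : h 0 = 0) (v : ℝ) : conj h v ≠ ⊥ :=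
  fun e => by simpa [e] using conj_nonneg h0 v

lemma top_above (hlam : 0 < lam) (h0 : h 0 = 0) (hge : ∀ x, 0 ≤ h x)
    (hdom : ∃ x : ℝ, 0 < x ∧ h x ≠ ⊤)
    (hstrict : conj h (tau lam h) ≠ (lam : EReal)) {y : ℝ} (hy : tau lam h < y) :
    conj h y = ⊤ := by
  by_contra hyt
  set τ := tau lam h with hτdef
  have hτle := conj_tau_le hlam h0 hge hdom
  have hτt : conj h τ ≠ ⊤ := fun e => by
    rw [e] at hτle
    exact absurd ((EReal.coe_lt_top lam).trans_le hτle) (lt_irrefl _)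
  have hτ0 : 0 ≤ τ := tau_nonneg hlam h0 hge hdom
  set a := (conj h τ).toReal with hadef
  set C := (conj h y).toReal with hCdef
  have hca : (a : EReal) = conj h τ := EReal.coe_toReal hτt (conj_ne_bot h0 τ)
  have hcC : (C : EReal) = conj h y := EReal.coe_toReal hyt (conj_ne_bot h0 y)
  have halam : a < lam := by
    rcases lt_or_eq_of_le (EReal.coe_le_coe_iff.mp (hca.le.trans hτle)) with hl | he
    · exact hl
    · exact absurd (by rw [← hca, he]) hstrict
  set s := min 1 ((lam - a)/(|C - a| + 1)) with hsdef
  have habs : 0 < |C - a| + 1 := by positivity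
  have hs0 : 0 < s := lt_min one_pos (div_pos (by linarith) habs)
  have hs1 : s ≤ 1 := min_le_left _ _
  have hsle : s * (|C - a| + 1) ≤ lam - a := by
    rw [← le_div_iff₀ habs]; exact min_le_right _ _
  have hcomb : (1 - s) * a + s * C ≤ lam := by
    nlinarith [le_abs_self (C - a), abs_nonneg (C - a)]
  set v := (1 - s) * τ + s * y with hvdef
  have hvτ : τ < v := by nlinarith
  have hconvv := conj_convex hge τ y (1 - s) s (by linarith) hs0.le (by ring)
  rw [← hca, ← hcC, ← EReal.coe_mul, ← EReal.coe_mul, ← EReal.coe_add] at hconvv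
  have hvT : v ∈ {w : ℝ | 0 ≤ w ∧ conj h w ≤ (lam : EReal)} :=
    ⟨le_of_lt (hτ0.trans_lt hvτ), hconvv.trans (EReal.coe_le_coe_iff.mpr hcomb)⟩
  have : v ≤ τ := le_csSup (T_bdd hge hdom) hvT
  linarith

lemma conj_tau_eq (hlam : 0 < lam) (h0 : h 0 = 0) (hge : ∀ x, 0 ≤ h x)
    (hdom : ∃ x : ℝ, 0 < x ∧ h x ≠ ⊤) (hmu : mu lam h < ⊤) :
    conj h (tau lam h) = (lam : EReal) := by
  by_contra hne
  have hSne : (subdiff (conj h) (tau lam h)).Nonempty := by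
    by_contra hemp
    rw [mu, if_neg hemp] at hmu
    exact lt_irrefl _ hmu
  obtain ⟨d, hd⟩ := hSne
  have hmem : ∀ t : ℝ, 0 ≤ t → (d + t) ∈ subdiff (conj h) (tau lam h) := by
    intro t ht y
    rcases le_or_gt y (tau lam h) with hy | hy
    · refine le_trans (add_le_add_right ?_ _) (hd y)
      exact EReal.coe_le_coe_iff.mpr (by nlinarith)
    · rw [top_above hlam h0 hge hdom hne hy]; exact le_top
  have hμtop : mu lam h = ⊤ := by
    rw [mu, if_pos ⟨d, hd⟩, sSup_eq_top]
    intro b hb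
    have key : ∀ M : ℝ, ∃ c ∈ (fun x : ℝ => (x : EReal)) ''
        {x : ℝ | 0 ≤ x ∧ x ∈ subdiff (conj h) (tau lam h)}, (M : EReal) < c := by
      intro M
      set t := max 0 (max (M - d + 1) (-d)) with htdef
      have ht0 : 0 ≤ t := le_max_left _ _
      have htd : -d ≤ t := (le_max_right _ _).trans (le_max_right _ _)
      have htM : M - d + 1 ≤ t := (le_max_left _ _).trans (le_max_right _ _)
      refine ⟨((d + t : ℝ) : EReal), ⟨d + t, ⟨by linarith, hmem t ht0⟩, rfl⟩, ?_⟩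
      exact_mod_cast (by linarith : M < d + t)
    induction b using EReal.rec with
    | bot =>
      obtain ⟨c, hc, _⟩ := key 0
      exact ⟨c, hc, by
        rcases hc with ⟨x, _, rfl⟩
        exact EReal.bot_lt_coe x⟩
    | coe M => exact key M
    | top => exact absurd hb (lt_irrefl _)
  rw [hμtop] at hmu
  exact lt_irrefl _ hmu
lemma sub_top_le (r : ℝ) (a : EReal) : (r:EReal) - ⊤ ≤ a := by simp

lemma sub_nonneg_le (hge : ∀ x, 0 ≤ h x) (r : ℝ) (x : ℝ) :
    ((r : ℝ) : EReal) - h x ≤ (r : EReal) := by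
  rw [sub_eq_add_neg]
  calc (r : EReal) + (-h x) ≤ (r : EReal) + 0 := by
        exact add_le_add_right (EReal.neg_le.mpr (by simpa using hge x)) _
    _ = (r : EReal) := add_zero _

lemma conj_le_of_dom_bdd (hge : ∀ x, 0 ≤ h x) {b : ℝ} (hb : ∀ x, b < x → h x = ⊤)
    {y : ℝ} (hy : 0 ≤ y) : conj h y ≤ ((y * b : ℝ) : EReal) := by
  apply iSup_le
  intro x
  by_cases hx : h x = ⊤
  · rw [hx]; simp
  have hxb : x ≤ b := by
    by_contra hc
    exact hx (hb x (not_le.mp hc))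
  exact (sub_nonneg_le hge (y*x) x).trans
    (EReal.coe_le_coe_iff.mpr (by nlinarith))

lemma h_toReal_mono (h0 : h 0 = 0) (hge : ∀ x, 0 ≤ h x) (hconv : EConvexOn h)
    {x y : ℝ} (hx : 0 ≤ x) (hxy : x ≤ y) (hyt : h y ≠ ⊤) :
    h x ≠ ⊤ ∧ (h x).toReal ≤ (h y).toReal := by
  have hm := h_mono h0 hge hconv hx hxy
  have hxt : h x ≠ ⊤ := fun e => hyt (top_le_iff.mp (e ▸ hm))
  exact ⟨hxt, EReal.toReal_le_toReal hm (h_ne_bot hge x) hyt⟩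

lemma chord_bound (h0 : h 0 = 0) (hge : ∀ x, 0 ≤ h x) (hconv : EConvexOn h)
    {x x'' : ℝ} (hx0 : 0 ≤ x) (hxx : x < x'')
    (hxt : h x ≠ ⊤) (hx''t : h x'' ≠ ⊤) :
    conj h (((h x'').toReal - (h x).toReal)/(x'' - x)) ≤
      (((((h x'').toReal - (h x).toReal)/(x'' - x)) * x'' - (h x).toReal : ℝ) : EReal) := by
  set Hx := (h x).toReal with hHx
  set Hx'' := (h x'').toReal with hHx''
  set y := (Hx'' - Hx)/(x'' - x) with hydef
  have hA : 0 < x'' - x := by linarith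
  have hyA : y * (x'' - x) = Hx'' - Hx := by rw [hydef, div_mul_cancel₀ _ hA.ne']
  have hy0 : 0 ≤ y := by
    apply div_nonneg _ hA.le
    have := (h_toReal_mono h0 hge hconv hx0 hxx.le hx''t).2
    linarith
  apply iSup_le
  intro x'
  by_cases hx' : h x' = ⊤
  · rw [hx']; exact sub_top_le _ _
  have hx'b := h_ne_bot hge x'
  set Hx' := (h x').toReal with hHx'
  rw [← EReal.coe_toReal hx' hx'b, ← EReal.coe_sub, EReal.coe_le_coe_iff]
  rcases lt_trichotomy x' x with hc | hc | hc
  · -- x' < x : convexity at x between x' and x''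
    have hB : 0 < x - x' := by linarith
    set A := x'' - x with hAd
    set B := x - x' with hBd
    have hab : (A/(A+B)) + (B/(A+B)) = 1 := by field_simp
    have hpt : (A/(A+B)) * x' + (B/(A+B)) * x'' = x := by field_simp; ring
    have hcv := hconv x' x'' (A/(A+B)) (B/(A+B)) (by positivity) (by positivity) hab
    rw [hpt] at hcv
    rw [← EReal.coe_toReal hx' hx'b, ← EReal.coe_toReal hx''t (h_ne_bot hge x''),
      ← EReal.coe_toReal hxt (h_ne_bot hge x), ← EReal.coe_mul, ← EReal.coe_mul,
      ← EReal.coe_add, EReal.coe_le_coe_iff] at hcv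
    have hcv' : (A+B) * Hx ≤ A * Hx' + B * Hx'' := by
      have hABpos : 0 < A + B := by positivity
      rw [div_mul_eq_mul_div, div_mul_eq_mul_div, ← add_div,
        le_div_iff₀ hABpos, mul_comm] at hcv
      linarith
    have e1 : B * Hx'' = B * Hx + B * (y * A) := by rw [hyA]; ring
    have h4 : A * (Hx - B * y) ≤ A * Hx' := by nlinarith [hcv', e1]
    have key : Hx - B * y ≤ Hx' := le_of_mul_le_mul_left h4 hA
    have e3 : y * x'' - y * x' = y * A + y * B := by rw [hAd, hBd]; ring
    nlinarith [key, e3, mul_nonneg hy0 hA.le]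
  · -- x' = x
    subst hc
    nlinarith
  · rcases le_or_gt x' x'' with hc2 | hc2
    · -- x < x' ≤ x''
      have := (h_toReal_mono h0 hge hconv hx0 hc.le hx').2
      nlinarith
    · -- x'' < x' : convexity at x''
      have hB : 0 < x' - x'' := by linarith
      set A := x'' - x with hAd
      set B := x' - x'' with hBd
      have hab : (B/(A+B)) + (A/(A+B)) = 1 := by
        rw [← add_div, add_comm B A]
        exact div_self (by positivity : (0:ℝ) < A + B).ne'
      have hpt : (B/(A+B)) * x + (A/(A+B)) * x' = x'' := by field_simp; ring
      have hcv := hconv x x' (B/(A+B)) (A/(A+B)) (by positivity) (by positivity) hab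
      rw [hpt] at hcv
      rw [← EReal.coe_toReal hx' hx'b, ← EReal.coe_toReal hx''t (h_ne_bot hge x''),
        ← EReal.coe_toReal hxt (h_ne_bot hge x), ← EReal.coe_mul, ← EReal.coe_mul,
        ← EReal.coe_add, EReal.coe_le_coe_iff] at hcv
      have hcv' : (A+B) * Hx'' ≤ B * Hx + A * Hx' := by
        have hABpos : 0 < A + B := by positivity
        rw [div_mul_eq_mul_div, div_mul_eq_mul_div, ← add_div,
          le_div_iff₀ hABpos, mul_comm] at hcv
        linarith
      have e1 : (A+B) * Hx'' = (A+B) * Hx + (A+B) * (y * A) := by rw [hyA]; ring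
      have h4 : A * (Hx + (A+B) * y) ≤ A * Hx' := by nlinarith [hcv', e1]
      have key : Hx + (A+B) * y ≤ Hx' := le_of_mul_le_mul_left h4 hA
      have e3 : y * x' - y * x'' = y * B := by rw [hBd]; ring
      nlinarith [key, e3, mul_nonneg hy0 hA.le]

theorem pert_decomposition_at_mu (lam : ℝ) (h : ℝ → EReal) (hlam : 0 < lam)
    (h0 : h 0 = 0) (hge : ∀ x : ℝ, 0 ≤ h x)
    (hlsc : LowerSemicontinuous h) (hconv : EConvexOn h)
    (hdom : ∃ x : ℝ, 0 < x ∧ h x ≠ ⊤) :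
    mu lam h < ⊤ →
      h (mu lam h).toReal = ((tau lam h * (mu lam h).toReal - lam : ℝ) : EReal) := by
  intro hmu
  have htaul : conj h (tau lam h) = (lam : EReal) := conj_tau_eq hlam h0 hge hdom hmu
  have hSne : (subdiff (conj h) (tau lam h)).Nonempty := by
    by_contra hemp
    rw [mu, if_neg hemp] at hmu
    exact lt_irrefl _ hmu
  have hμdef : mu lam h = sSup ((fun x : ℝ => (x : EReal)) ''
      {x : ℝ | 0 ≤ x ∧ x ∈ subdiff (conj h) (tau lam h)}) := by
    rw [mu, if_pos hSne]
  have hτ0 : 0 ≤ tau lam h := tau_nonneg hlam h0 hge hdom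
  have hdpos : ∀ d ∈ subdiff (conj h) (tau lam h), 0 < d := by
    intro d hd
    have h1 := hd 0
    rw [htaul, conj_zero h0 hge, ← EReal.coe_add] at h1
    have h2 : lam + d * (0 - tau lam h) ≤ 0 := by exact_mod_cast h1
    by_contra hdn
    push_neg at hdn
    nlinarith
  obtain ⟨d0, hd0⟩ := hSne
  have hd0pos := hdpos d0 hd0
  have hle : (d0 : EReal) ≤ mu lam h := by
    rw [hμdef]
    exact le_sSup ⟨d0, ⟨hd0pos.le, hd0⟩, rfl⟩
  have hμt : mu lam h ≠ ⊤ := hmu.ne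
  have hμb : mu lam h ≠ ⊥ := by
    intro e
    rw [e, le_bot_iff] at hle
    exact EReal.coe_ne_bot d0 hle
  have hcm : ((mu lam h).toReal : EReal) = mu lam h := EReal.coe_toReal hμt hμb
  have hd0m : d0 ≤ (mu lam h).toReal := by
    rw [← hcm] at hle
    exact_mod_cast hle
  have hm0 : 0 < (mu lam h).toReal := lt_of_lt_of_le hd0pos hd0m
  have hdlem : ∀ d ∈ subdiff (conj h) (tau lam h), d ≤ (mu lam h).toReal := by
    intro d hd
    have h1 : (d : EReal) ≤ mu lam h := by
      rw [hμdef]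
      exact le_sSup ⟨d, ⟨(hdpos d hd).le, hd⟩, rfl⟩
    rw [← hcm] at h1
    exact_mod_cast h1
  have hlub : ∀ B : ℝ, (∀ d ∈ subdiff (conj h) (tau lam h), d ≤ B) →
      (mu lam h).toReal ≤ B := by
    intro B hB
    have h1 : mu lam h ≤ (B : EReal) := by
      rw [hμdef]
      apply sSup_le
      rintro c ⟨x, ⟨_, hxm⟩, rfl⟩
      show (x : EReal) ≤ (B : EReal)
      exact_mod_cast hB x hxm
    rw [← hcm] at h1
    exact_mod_cast h1
  -- the key subgradient-type inequality for m = (mu lam h).toReal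
  have hdag : ∀ y : ℝ,
      ((lam + (mu lam h).toReal * (y - tau lam h) : ℝ) : EReal) ≤ conj h y := by
    intro y
    by_cases hyt : conj h y = ⊤
    · rw [hyt]; exact le_top
    have hcC : ((conj h y).toReal : EReal) = conj h y :=
      EReal.coe_toReal hyt (conj_ne_bot h0 y)
    rcases le_or_gt y (tau lam h) with hy | hy
    · have h1 := hd0 y
      rw [htaul, ← EReal.coe_add] at h1
      refine le_trans (EReal.coe_le_coe_iff.mpr ?_) h1
      nlinarith [hd0m]
    · rw [← hcC, EReal.coe_le_coe_iff]
      have hyτ : 0 < y - tau lam h := by linarith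
      have hB : ∀ d ∈ subdiff (conj h) (tau lam h),
          d ≤ ((conj h y).toReal - lam)/(y - tau lam h) := by
        intro d hd
        have h1 := hd y
        rw [htaul, ← EReal.coe_add, ← hcC] at h1
        have h2 : lam + d * (y - tau lam h) ≤ (conj h y).toReal := by exact_mod_cast h1
        rw [le_div_iff₀ hyτ]
        linarith
      have h3 := hlub _ hB
      have h4 := (mul_le_mul_iff_of_pos_right hyτ).mpr h3
      rw [div_mul_cancel₀ _ hyτ.ne'] at h4
      linarith
  -- lower bound
  have hlow : ((tau lam h * (mu lam h).toReal - lam : ℝ) : EReal) ≤ h (mu lam h).toReal := by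
    by_cases hmt : h (mu lam h).toReal = ⊤
    · rw [hmt]; exact le_top
    rw [← EReal.coe_toReal hmt (h_ne_bot hge _), EReal.coe_le_coe_iff]
    have := FY_real hge hmt htaul.le
    linarith
  -- left-approach points exist
  have hclose : ∀ δ : ℝ, 0 < δ →
      ∃ x : ℝ, (mu lam h).toReal - δ < x ∧ x < (mu lam h).toReal ∧ h x ≠ ⊤ := by
    by_contra hcon
    push_neg at hcon
    obtain ⟨δ, hδ, hall⟩ := hcon
    have hbm : max ((mu lam h).toReal - δ/2) ((mu lam h).toReal/2) < (mu lam h).toReal :=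
      max_lt (by linarith) (by linarith)
    have hb0 : 0 ≤ max ((mu lam h).toReal - δ/2) ((mu lam h).toReal/2) :=
      le_trans (by linarith) (le_max_right _ _)
    have hbtop : ∀ x, max ((mu lam h).toReal - δ/2) ((mu lam h).toReal/2) < x → h x = ⊤ := by
      intro x hx
      have hxl : (mu lam h).toReal - δ < x := by
        have := le_max_left ((mu lam h).toReal - δ/2) ((mu lam h).toReal/2)
        linarith
      rcases lt_or_ge x ((mu lam h).toReal) with hxm | hxm
      · exact hall x hxl hxm
      · have hmid : h ((max ((mu lam h).toReal - δ/2) ((mu lam h).toReal/2)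
            + (mu lam h).toReal)/2) = ⊤ := by
          apply hall
          · have := le_max_left ((mu lam h).toReal - δ/2) ((mu lam h).toReal/2)
            linarith
          · linarith
        have hmono := h_mono h0 hge hconv (by linarith : (0:ℝ) ≤
            (max ((mu lam h).toReal - δ/2) ((mu lam h).toReal/2) + (mu lam h).toReal)/2)
          (by linarith : (max ((mu lam h).toReal - δ/2) ((mu lam h).toReal/2)
            + (mu lam h).toReal)/2 ≤ x)
        rw [hmid] at hmono
        exact top_le_iff.mp hmono
    have hmb : 0 < (mu lam h).toReal - max ((mu lam h).toReal - δ/2) ((mu lam h).toReal/2) := by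
      linarith
    have hy0 : (0:ℝ) ≤ max 0 (((mu lam h).toReal * tau lam h - lam)/
        ((mu lam h).toReal - max ((mu lam h).toReal - δ/2) ((mu lam h).toReal/2)) + 1) :=
      le_max_left _ _
    have h1 := (hdag _).trans (conj_le_of_dom_bdd hge hbtop hy0)
    have h2 : lam + (mu lam h).toReal * (max 0 (((mu lam h).toReal * tau lam h - lam)/
          ((mu lam h).toReal - max ((mu lam h).toReal - δ/2) ((mu lam h).toReal/2)) + 1)
          - tau lam h)
        ≤ max 0 (((mu lam h).toReal * tau lam h - lam)/
          ((mu lam h).toReal - max ((mu lam h).toReal - δ/2) ((mu lam h).toReal/2)) + 1)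
          * max ((mu lam h).toReal - δ/2) ((mu lam h).toReal/2) := by
      exact_mod_cast h1
    have hy1 : ((mu lam h).toReal * tau lam h - lam)/
          ((mu lam h).toReal - max ((mu lam h).toReal - δ/2) ((mu lam h).toReal/2)) + 1
        ≤ max 0 (((mu lam h).toReal * tau lam h - lam)/
          ((mu lam h).toReal - max ((mu lam h).toReal - δ/2) ((mu lam h).toReal/2)) + 1) :=
      le_max_right _ _
    have h5 := (mul_le_mul_iff_of_pos_right hmb).mpr hy1
    rw [add_mul, div_mul_cancel₀ _ hmb.ne', one_mul] at h5
    nlinarith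
  -- upper bound
  have hup : h (mu lam h).toReal ≤ ((tau lam h * (mu lam h).toReal - lam : ℝ) : EReal) := by
    by_contra hgt
    push_neg at hgt
    have hev := hlsc (mu lam h).toReal _ hgt
    rw [Metric.eventually_nhds_iff] at hev
    obtain ⟨δ, hδ, hb⟩ := hev
    obtain ⟨x, hx1, hx2, hxt⟩ := hclose (min δ ((mu lam h).toReal)) (lt_min hδ hm0)
    obtain ⟨x'', hx''1, hx''2, hx''t⟩ := hclose ((mu lam h).toReal - x) (by linarith)
    have hxx'' : x < x'' := by linarith
    have hx0 : 0 < x := by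
      have := min_le_right δ ((mu lam h).toReal)
      linarith
    have hchord := chord_bound h0 hge hconv hx0.le hxx'' hxt hx''t
    have hyc0 : 0 ≤ ((h x'').toReal - (h x).toReal)/(x'' - x) := by
      apply div_nonneg _ (by linarith)
      have := (h_toReal_mono h0 hge hconv hx0.le hxx''.le hx''t).2
      linarith
    have h1 := (hdag (((h x'').toReal - (h x).toReal)/(x'' - x))).trans hchord
    have h2 : lam + (mu lam h).toReal * (((h x'').toReal - (h x).toReal)/(x'' - x) - tau lam h)
        ≤ ((h x'').toReal - (h x).toReal)/(x'' - x) * x'' - (h x).toReal := by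
      exact_mod_cast h1
    have hfin : (h x).toReal ≤ tau lam h * (mu lam h).toReal - lam := by
      nlinarith [mul_nonneg hyc0 (by linarith : (0:ℝ) ≤ (mu lam h).toReal - x'')]
    have hcontr := hb (show dist x (mu lam h).toReal < δ by
      rw [Real.dist_eq, abs_lt]
      have := min_le_left δ ((mu lam h).toReal)
      constructor <;> linarith)
    simp only [gt_iff_lt] at hcontr
    rw [← EReal.coe_toReal hxt (h_ne_bot hge x), EReal.coe_lt_coe_iff] at hcontr
    linarith
  exact le_antisymm hup hlow
end
end
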